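/- Let U be a positive random variable and suppose there exist constants C > 0 and κ > 0 such that E[e^{-λ U}] ≤ C λ^{-κ} for all λ > 0. For ε > 0, let (U_n^ε)_{n≥1} be i.i.d. copies of ε² U, s_n^ε their partial sums, and N_T^ε = inf{n ≥ 1 : s_n^ε ≥ T}. Then for every j ∈ ℕ, P(N_T^ε > j) ≤ ( e T C^{1/κ} / (j κ ε²) )^{jκ}. -/

import Mathlib

open MeasureTheory ProbabilityTheory Real

/-- If `E[e^(-λU)] ≤ C λ^(-κ)` for all `λ > 0` and `(Uₙᵉ)` are i.i.d. copies of `ε²U`, then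
`P(N_T^ε > j) ≤ (e T C^(1/κ) / (j κ ε²))^(jκ)`. -/
theorem firstPassage_tail_bound {Ω : Type*} [MeasurableSpace Ω] (μ : Measure Ω)
    [IsProbabilityMeasure μ] (U : Ω → ℝ) (hUmeas : Measurable U) (hUpos : ∀ ω, 0 < U ω)
    (C κ : ℝ) (hC : 0 < C) (hκ : 0 < κ)
    (hlap : ∀ lam : ℝ, 0 < lam → ∫ ω, Real.exp (-lam * U ω) ∂μ ≤ C * lam ^ (-κ))
    (ε : ℝ) (hε : 0 < ε)
    (Uε : ℕ → Ω → ℝ) (hUεmeas : ∀ n, Measurable (Uε n))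
    (hindep : iIndepFun Uε μ)
    (hident : ∀ n, Measure.map (Uε n) μ = Measure.map (fun ω => ε ^ 2 * U ω) μ)
    (T : ℝ) (hT : 0 < T)
    (s : ℕ → Ω → ℝ) (hs : ∀ n ω, s n ω = ∑ k ∈ Finset.range n, Uε (k + 1) ω)
    (N : Ω → ℕ) (hN : ∀ ω, N ω = sInf {n | 1 ≤ n ∧ T ≤ s n ω})
    (j : ℕ) :
    (μ {ω | j < N ω}).toReal ≤
      (Real.exp 1 * T * C ^ (1/κ) / (j * κ * ε ^ 2)) ^ ((j : ℝ) * κ) := by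
  rcases Nat.eq_zero_or_pos j with hj | hj
  · subst hj
    simp only [Nat.cast_zero, zero_mul, Real.rpow_zero]
    calc (μ {ω | 0 < N ω}).toReal ≤ (μ Set.univ).toReal := by
          gcongr; exacts [measure_ne_top _ _, Set.subset_univ _]
      _ = 1 := by simp
  -- main case, j ≥ 1
  have hjR : (0:ℝ) < j := by exact_mod_cast hj
  set lam : ℝ := j * κ / T with hlam_def
  have hlam : 0 < lam := by positivity
  -- a.e. positivity of Uε i
  have hUε_pos : ∀ᵐ ω ∂μ, ∀ i, 0 < Uε i ω := by
    rw [ae_all_iff]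
    intro i
    have h0 : μ {ω | Uε i ω ≤ 0} = 0 := by
      have h1 : μ {ω | Uε i ω ≤ 0} = (Measure.map (Uε i) μ) (Set.Iic 0) := by
        rw [Measure.map_apply (hUεmeas i) measurableSet_Iic]; rfl
      rw [h1, hident i,
        Measure.map_apply (hUmeas.const_mul _) measurableSet_Iic]
      have h2 : (fun ω => ε ^ 2 * U ω) ⁻¹' Set.Iic 0 = ∅ := by
        ext ω
        simp only [Set.mem_preimage, Set.mem_Iic, Set.mem_empty_iff_false, iff_false, not_le]
        have := hUpos ω; positivity
      simp [h2]
    filter_upwards [measure_eq_zero_iff_ae_notMem.mp h0] with ω hω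
    simpa using hω
  -- measurability of s j
  have hs_eq : s j = fun ω => ∑ i ∈ Finset.Ico 1 (j+1), Uε i ω := by
    funext ω
    rw [hs j ω, Finset.sum_Ico_eq_sum_range]
    simp [add_comm]
  have hsj_meas : Measurable (s j) := by
    rw [hs_eq]; exact Finset.measurable_sum _ fun i _ => hUεmeas i
  -- integrability of exp(-lam * s j)
  have hint : Integrable (fun ω => Real.exp (-lam * s j ω)) μ := by
    refine (integrable_const (1:ℝ)).mono' ((hsj_meas.const_mul _).exp.aestronglyMeasurable) ?_
    filter_upwards [hUε_pos] with ω hω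
    have hsnn : 0 ≤ s j ω := by
      rw [hs j ω]; exact Finset.sum_nonneg fun k _ => (hω (k+1)).le
    rw [Real.norm_eq_abs, abs_of_pos (Real.exp_pos _), ← Real.exp_zero]
    apply Real.exp_le_exp.2
    nlinarith
  -- Chernoff
  have hchern : (μ {ω | s j ω ≤ T}).toReal ≤ Real.exp (lam * T) * mgf (s j) μ (-lam) := by
    have := measure_le_le_exp_mul_mgf (X := s j) (μ := μ) T (neg_nonpos.mpr hlam.le) hint
    simpa [measureReal_def] using this
  -- subset
  have hsub : {ω | j < N ω} ⊆ {ω | s j ω ≤ T} := by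
    intro ω hω
    simp only [Set.mem_setOf_eq] at hω ⊢
    by_contra h
    push_neg at h
    have hj' : j ∈ {n | 1 ≤ n ∧ T ≤ s n ω} := ⟨hj, h.le⟩
    have := csInf_le (OrderBot.bddBelow _) hj'
    rw [← hN ω] at this
    omega
  -- mgf of each Uε i
  have hmgf_le : ∀ i, mgf (Uε i) μ (-lam) ≤ C * (lam * ε ^ 2) ^ (-κ) := by
    intro i
    have hmeas2 : Measurable fun x : ℝ => Real.exp (-lam * x) :=
      (measurable_id.const_mul _).exp
    have h1 : mgf (Uε i) μ (-lam) = ∫ x, Real.exp (-lam * x) ∂(Measure.map (Uε i) μ) := by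
      rw [mgf, integral_map (hUεmeas i).aemeasurable hmeas2.aestronglyMeasurable]
    rw [h1, hident i, integral_map (hUmeas.const_mul _).aemeasurable hmeas2.aestronglyMeasurable]
    have h2 : (fun ω => Real.exp (-lam * (ε ^ 2 * U ω))) =
        fun ω => Real.exp (-(lam * ε ^ 2) * U ω) := by
      funext ω; ring_nf
    rw [h2]
    exact hlap (lam * ε ^ 2) (by positivity)
  -- mgf of sum
  have hmgf_sum : mgf (s j) μ (-lam) = ∏ i ∈ Finset.Ico 1 (j+1), mgf (Uε i) μ (-lam) := by
    rw [show s j = ∑ i ∈ Finset.Ico 1 (j+1), Uε i from by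
      funext ω; rw [hs_eq]; simp]
    exact hindep.mgf_sum hUεmeas _
  have hB : (0:ℝ) ≤ C * (lam * ε ^ 2) ^ (-κ) := by positivity
  have hprod : mgf (s j) μ (-lam) ≤ (C * (lam * ε ^ 2) ^ (-κ)) ^ j := by
    rw [hmgf_sum]
    calc ∏ i ∈ Finset.Ico 1 (j+1), mgf (Uε i) μ (-lam)
        ≤ ∏ i ∈ Finset.Ico 1 (j+1), (C * (lam * ε ^ 2) ^ (-κ)) :=
          Finset.prod_le_prod (fun i _ => mgf_nonneg) (fun i _ => hmgf_le i)
      _ = (C * (lam * ε ^ 2) ^ (-κ)) ^ j := by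
          rw [Finset.prod_const, Nat.card_Ico]; norm_num
  -- final arithmetic
  have hA : 0 < Real.exp 1 * T * C ^ (1/κ) / (j * κ * ε ^ 2) := by positivity
  have hkey : Real.exp κ * (C * (lam * ε ^ 2) ^ (-κ)) =
      (Real.exp 1 * T * C ^ (1/κ) / (j * κ * ε ^ 2)) ^ κ := by
    have hlamε : lam * ε ^ 2 = (j * κ * ε ^ 2) / T := by
      rw [hlam_def]; field_simp
    rw [hlamε, Real.rpow_neg (by positivity), Real.div_rpow (by positivity) hT.le,
      Real.div_rpow (by positivity) (by positivity),
      Real.mul_rpow (by positivity) (by positivity),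
      Real.mul_rpow (by positivity) (by positivity),
      Real.mul_rpow (by positivity) (by positivity),
      Real.mul_rpow (by positivity) (by positivity),
      Real.exp_one_rpow, ← Real.rpow_mul hC.le, one_div_mul_cancel hκ.ne',
      Real.rpow_one]
    field_simp
  have hTk : lam * T = (j:ℝ) * κ := by rw [hlam_def]; field_simp
  calc (μ {ω | j < N ω}).toReal
      ≤ (μ {ω | s j ω ≤ T}).toReal :=
        ENNReal.toReal_mono (measure_ne_top _ _) (measure_mono hsub)
    _ ≤ Real.exp (lam * T) * mgf (s j) μ (-lam) := hchern
    _ ≤ Real.exp (lam * T) * (C * (lam * ε ^ 2) ^ (-κ)) ^ j := by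
        exact mul_le_mul_of_nonneg_left hprod (Real.exp_pos _).le
    _ = (Real.exp κ * (C * (lam * ε ^ 2) ^ (-κ))) ^ j := by
        rw [hTk, Real.exp_nat_mul, ← mul_pow]
    _ = ((Real.exp 1 * T * C ^ (1/κ) / (j * κ * ε ^ 2)) ^ κ) ^ j := by rw [hkey]
    _ = (Real.exp 1 * T * C ^ (1/κ) / (j * κ * ε ^ 2)) ^ ((j:ℝ) * κ) := by
        rw [← Real.rpow_natCast (_ ^ κ) j, ← Real.rpow_mul hA.le, mul_comm κ (j:ℝ)]
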